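/- Let n ≥ 2 and n₁, n₂ be integers with 1 ≤ n₁, n₁+1 < n₂ < n, and let m₁, m₂ ∈ ℕ. Let S₁ be the following finite set of ℝ-linear endomorphisms of B = ℝ[x₁,…,xₙ,y₁,…,yₙ]: f ↦ −x_i·∂f/∂x_r − y_i·∂f/∂y_r for 1 ≤ i < r ≤ n₁; f ↦ x_s·∂f/∂x_j − y_j·∂f/∂y_s for n₁ < j < s ≤ n₂; and f ↦ x_t·∂f/∂x_p + y_t·∂f/∂y_p for n₂ < p < t ≤ n. Let v = x_{n₁}^{m₁}·y_{n₂+1}^{m₂}. Then the ℝ-linear span of all polynomials of the form T₁(T₂(⋯T_j(v)⋯)), for j ≥ 0 and T₁,…,T_j ∈ S₁, equals the ℝ-linear span of the set of monomials { ∏_{i=1}^{n₁} x_i^{k_i} · ∏_{t=n₂+1}^{n} y_t^{l_t} : k_i, l_t ∈ ℕ, ∑_{i=1}^{n₁} k_i = m₁, ∑_{t=n₂+1}^{n} l_t = m₂ }. -/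

import Mathlib

open MvPolynomial

/-- Multiplication by a polynomial, as an ℝ-linear endomorphism. -/
noncomputable def mulE {σ : Type} (a : MvPolynomial σ ℝ) :
    Module.End ℝ (MvPolynomial σ ℝ) := LinearMap.mulLeft ℝ a

/-- Formal partial derivative ∂/∂v, as an ℝ-linear endomorphism. -/
noncomputable def pdE {σ : Type} [DecidableEq σ] (v : σ) :
    Module.End ℝ (MvPolynomial σ ℝ) := (pderiv v).toLinearMap

/-- The set S₁ of endomorphisms of B = ℝ[x₁,…,xₙ,y₁,…,yₙ] (x's are `Sum.inl`, y's
`Sum.inr`, 0-based indexing):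
f ↦ −x_i ∂f/∂x_r − y_i ∂f/∂y_r for 1 ≤ i < r ≤ n₁ (0-based: i < r, r.val < n₁);
f ↦ x_s ∂f/∂x_j − y_j ∂f/∂y_s for n₁ < j < s ≤ n₂ (0-based: n₁ ≤ j.val, j < s, s.val < n₂);
f ↦ x_t ∂f/∂x_p + y_t ∂f/∂y_p for n₂ < p < t ≤ n (0-based: n₂ ≤ p.val, p < t). -/
def S1set (n n₁ n₂ : ℕ) : Set (Module.End ℝ (MvPolynomial (Fin n ⊕ Fin n) ℝ)) :=
  {T | (∃ i r : Fin n, i < r ∧ r.val < n₁ ∧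
          T = -(mulE (X (Sum.inl i)) * pdE (Sum.inl r))
                - mulE (X (Sum.inr i)) * pdE (Sum.inr r)) ∨
       (∃ j s : Fin n, n₁ ≤ j.val ∧ j < s ∧ s.val < n₂ ∧
          T = mulE (X (Sum.inl s)) * pdE (Sum.inl j)
                - mulE (X (Sum.inr j)) * pdE (Sum.inr s)) ∨
       (∃ p t : Fin n, n₂ ≤ p.val ∧ p < t ∧
          T = mulE (X (Sum.inl t)) * pdE (Sum.inl p)
                + mulE (X (Sum.inr t)) * pdE (Sum.inr p))}

lemma op_monomial {σ : Type} [DecidableEq σ] (a b : σ) (d : σ →₀ ℕ) (c : ℝ) :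
    (mulE (X a) * pdE b) (monomial d c) =
      monomial (d - Finsupp.single b 1 + Finsupp.single a 1) (c * d b) := by
  simp [mulE, pdE, Module.End.mul_apply, pderiv_monomial, X, monomial_mul, add_comm]

lemma op_monomial' {σ : Type} [DecidableEq σ] (a b : σ) (d : σ →₀ ℕ) (c : ℝ) :
    (mulE (X a) * pdE b) (monomial (d + Finsupp.single b 1) c) =
      monomial (d + Finsupp.single a 1) (c * ((d b : ℝ) + 1)) := by
  rw [op_monomial]
  congr 1
  · rw [add_tsub_cancel_right]
  · simp [Finsupp.add_apply, Finsupp.single_apply]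

lemma prod_monomial {σ ι : Type} [DecidableEq ι] (s : Finset ι) (f : ι → (σ →₀ ℕ)) :
    (∏ i ∈ s, monomial (f i) (1:ℝ)) = monomial (∑ i ∈ s, f i) 1 := by
  induction s using Finset.induction with
  | empty => simp
  | insert _ _ h ih => simp [Finset.prod_insert h, Finset.sum_insert h, ih, monomial_mul]

lemma sub_add_single {σ : Type} [DecidableEq σ] (d : σ →₀ ℕ) (b : σ) (h : d b ≠ 0) :
    d = (d - Finsupp.single b 1) + Finsupp.single b 1 := by
  rw [tsub_add_cancel_of_le]
  rw [Finsupp.single_le_iff]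
  omega


section Main
variable (n n₁ n₂ m₁ m₂ : ℕ)

/-- The monomial-form description of the right-hand side set. -/
def Mset : Set (MvPolynomial (Fin n ⊕ Fin n) ℝ) :=
  {f | ∃ d : (Fin n ⊕ Fin n) →₀ ℕ,
    (∀ a : Fin n, n₁ ≤ a.val → d (Sum.inl a) = 0) ∧
    (∀ a : Fin n, a.val < n₂ → d (Sum.inr a) = 0) ∧
    (∑ i ∈ Finset.univ.filter (fun i : Fin n => i.val < n₁), d (Sum.inl i)) = m₁ ∧
    (∑ t ∈ Finset.univ.filter (fun t : Fin n => n₂ ≤ t.val), d (Sum.inr t)) = m₂ ∧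
    f = monomial d 1}

lemma sum_single_inl (s : Finset (Fin n)) (c : Fin n) (k : ℕ) :
    ∑ j ∈ s, (Finsupp.single (Sum.inl c : Fin n ⊕ Fin n) k) (Sum.inl j)
      = if c ∈ s then k else 0 := by
  simp [Finsupp.single_apply, Finset.sum_ite_eq]

lemma sum_single_inr (s : Finset (Fin n)) (c : Fin n) (k : ℕ) :
    ∑ j ∈ s, (Finsupp.single (Sum.inr c : Fin n ⊕ Fin n) k) (Sum.inr j)
      = if c ∈ s then k else 0 := by
  simp [Finsupp.single_apply, Finset.sum_ite_eq]

lemma sum_single_inr_inl (s : Finset (Fin n)) (c : Fin n) (k : ℕ) :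
    ∑ j ∈ s, (Finsupp.single (Sum.inr c : Fin n ⊕ Fin n) k) (Sum.inl j) = 0 := by
  simp [Finsupp.single_apply]

lemma sum_single_inl_inr (s : Finset (Fin n)) (c : Fin n) (k : ℕ) :
    ∑ j ∈ s, (Finsupp.single (Sum.inl c : Fin n ⊕ Fin n) k) (Sum.inr j) = 0 := by
  simp [Finsupp.single_apply]

lemma sum_single_apply_inl (s : Finset (Fin n)) (g : Fin n → ℕ) (a : Fin n) :
    ∑ i ∈ s, (Finsupp.single (Sum.inl i : Fin n ⊕ Fin n) (g i)) (Sum.inl a)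
      = if a ∈ s then g a else 0 := by
  simp [Finsupp.single_apply, Finset.sum_ite_eq']

lemma sum_single_apply_inr (s : Finset (Fin n)) (g : Fin n → ℕ) (a : Fin n) :
    ∑ i ∈ s, (Finsupp.single (Sum.inr i : Fin n ⊕ Fin n) (g i)) (Sum.inr a)
      = if a ∈ s then g a else 0 := by
  simp [Finsupp.single_apply, Finset.sum_ite_eq']

lemma sum_single_apply_inr_inl (s : Finset (Fin n)) (g : Fin n → ℕ) (a : Fin n) :
    ∑ i ∈ s, (Finsupp.single (Sum.inr i : Fin n ⊕ Fin n) (g i)) (Sum.inl a) = 0 := by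
  simp [Finsupp.single_apply]

lemma sum_single_apply_inl_inr (s : Finset (Fin n)) (g : Fin n → ℕ) (a : Fin n) :
    ∑ i ∈ s, (Finsupp.single (Sum.inl i : Fin n ⊕ Fin n) (g i)) (Sum.inr a) = 0 := by
  simp [Finsupp.single_apply]

lemma prod_X_pow_eq (kk ll : Fin n → ℕ) :
    (∏ i ∈ Finset.univ.filter (fun i : Fin n => i.val < n₁),
        (X (Sum.inl i) : MvPolynomial (Fin n ⊕ Fin n) ℝ) ^ kk i) *
      (∏ t ∈ Finset.univ.filter (fun t : Fin n => n₂ ≤ t.val),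
        (X (Sum.inr t) : MvPolynomial (Fin n ⊕ Fin n) ℝ) ^ ll t)
    = monomial ((∑ i ∈ Finset.univ.filter (fun i : Fin n => i.val < n₁),
          Finsupp.single (Sum.inl i) (kk i)) +
        (∑ t ∈ Finset.univ.filter (fun t : Fin n => n₂ ≤ t.val),
          Finsupp.single (Sum.inr t) (ll t))) 1 := by
  simp_rw [X_pow_eq_monomial]
  rw [prod_monomial, prod_monomial, monomial_mul, one_mul]


lemma Mset_eq :
    Mset n n₁ n₂ m₁ m₂ =
      {f : MvPolynomial (Fin n ⊕ Fin n) ℝ |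
        ∃ kk ll : Fin n → ℕ,
          (∑ i ∈ Finset.univ.filter (fun i : Fin n => i.val < n₁), kk i) = m₁ ∧
          (∑ t ∈ Finset.univ.filter (fun t : Fin n => n₂ ≤ t.val), ll t) = m₂ ∧
          f = (∏ i ∈ Finset.univ.filter (fun i : Fin n => i.val < n₁),
                X (Sum.inl i) ^ kk i) *
              (∏ t ∈ Finset.univ.filter (fun t : Fin n => n₂ ≤ t.val),
                X (Sum.inr t) ^ ll t)} := by
  ext f
  constructor
  · rintro ⟨d, hx, hy, hsx, hsy, rfl⟩
    refine ⟨fun i => d (Sum.inl i), fun t => d (Sum.inr t), hsx, hsy, ?_⟩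
    rw [prod_X_pow_eq]
    have hd : d = (∑ i ∈ Finset.univ.filter (fun i : Fin n => i.val < n₁),
          Finsupp.single (Sum.inl i) (d (Sum.inl i))) +
        (∑ t ∈ Finset.univ.filter (fun t : Fin n => n₂ ≤ t.val),
          Finsupp.single (Sum.inr t) (d (Sum.inr t))) := by
      ext a
      rw [Finsupp.add_apply, Finsupp.finset_sum_apply, Finsupp.finset_sum_apply]
      cases a with
      | inl i =>
        rw [sum_single_apply_inl, sum_single_apply_inr_inl]
        simp only [Finset.mem_filter, Finset.mem_univ, true_and, add_zero]
        split
        · rfl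
        · next h => exact hx i (by omega)
      | inr t =>
        rw [sum_single_apply_inr, sum_single_apply_inl_inr]
        simp only [Finset.mem_filter, Finset.mem_univ, true_and, zero_add]
        split
        · rfl
        · next h => exact hy t (by omega)
    exact congrArg (fun e => monomial e (1:ℝ)) hd
  · rintro ⟨kk, ll, hsx, hsy, rfl⟩
    refine ⟨(∑ i ∈ Finset.univ.filter (fun i : Fin n => i.val < n₁),
          Finsupp.single (Sum.inl i) (kk i)) +
        (∑ t ∈ Finset.univ.filter (fun t : Fin n => n₂ ≤ t.val),
          Finsupp.single (Sum.inr t) (ll t)), ?_, ?_, ?_, ?_, (prod_X_pow_eq n n₁ n₂ kk ll)⟩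
    · intro a ha
      rw [Finsupp.add_apply, Finsupp.finset_sum_apply, Finsupp.finset_sum_apply,
        sum_single_apply_inl, sum_single_apply_inr_inl]
      simp only [Finset.mem_filter, Finset.mem_univ, true_and, add_zero]
      rw [if_neg (by omega)]
    · intro a ha
      rw [Finsupp.add_apply, Finsupp.finset_sum_apply, Finsupp.finset_sum_apply,
        sum_single_apply_inl_inr, sum_single_apply_inr]
      simp only [Finset.mem_filter, Finset.mem_univ, true_and, zero_add]
      rw [if_neg (by omega)]
    · rw [← hsx]
      apply Finset.sum_congr rfl
      intro i hi
      simp only [Finset.mem_filter, Finset.mem_univ, true_and] at hi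
      rw [Finsupp.add_apply, Finsupp.finset_sum_apply, Finsupp.finset_sum_apply,
        sum_single_apply_inl, sum_single_apply_inr_inl]
      simp only [Finset.mem_filter, Finset.mem_univ, true_and, add_zero]
      rw [if_pos (by simp [hi])]
    · rw [← hsy]
      apply Finset.sum_congr rfl
      intro t ht
      simp only [Finset.mem_filter, Finset.mem_univ, true_and] at ht
      rw [Finsupp.add_apply, Finsupp.finset_sum_apply, Finsupp.finset_sum_apply,
        sum_single_apply_inl_inr, sum_single_apply_inr]
      simp only [Finset.mem_filter, Finset.mem_univ, true_and, zero_add]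
      rw [if_pos (by simp [ht])]


lemma sum_add_single_inl (s : Finset (Fin n)) (d₀ : (Fin n ⊕ Fin n) →₀ ℕ) (c : Fin n) (k : ℕ) :
    ∑ j ∈ s, (d₀ + Finsupp.single (Sum.inl c : Fin n ⊕ Fin n) k) (Sum.inl j)
      = (∑ j ∈ s, d₀ (Sum.inl j)) + (if c ∈ s then k else 0) := by
  simp only [Finsupp.add_apply, Finset.sum_add_distrib, sum_single_inl]

lemma sum_add_single_inr (s : Finset (Fin n)) (d₀ : (Fin n ⊕ Fin n) →₀ ℕ) (c : Fin n) (k : ℕ) :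
    ∑ j ∈ s, (d₀ + Finsupp.single (Sum.inr c : Fin n ⊕ Fin n) k) (Sum.inr j)
      = (∑ j ∈ s, d₀ (Sum.inr j)) + (if c ∈ s then k else 0) := by
  simp only [Finsupp.add_apply, Finset.sum_add_distrib, sum_single_inr]

lemma sum_add_single_inl_inr (s : Finset (Fin n)) (d₀ : (Fin n ⊕ Fin n) →₀ ℕ) (c : Fin n) (k : ℕ) :
    ∑ j ∈ s, (d₀ + Finsupp.single (Sum.inl c : Fin n ⊕ Fin n) k) (Sum.inr j) = ∑ j ∈ s, d₀ (Sum.inr j) := by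
  simp only [Finsupp.add_apply, Finset.sum_add_distrib, sum_single_inl_inr, add_zero]

lemma sum_add_single_inr_inl (s : Finset (Fin n)) (d₀ : (Fin n ⊕ Fin n) →₀ ℕ) (c : Fin n) (k : ℕ) :
    ∑ j ∈ s, (d₀ + Finsupp.single (Sum.inr c : Fin n ⊕ Fin n) k) (Sum.inl j) = ∑ j ∈ s, d₀ (Sum.inl j) := by
  simp only [Finsupp.add_apply, Finset.sum_add_distrib, sum_single_inr_inl, add_zero]


def Lset (v : MvPolynomial (Fin n ⊕ Fin n) ℝ) :
    Set (MvPolynomial (Fin n ⊕ Fin n) ℝ) :=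
  {f | ∃ l : List (Module.End ℝ (MvPolynomial (Fin n ⊕ Fin n) ℝ)),
        (∀ T ∈ l, T ∈ S1set n n₁ n₂) ∧ f = l.prod v}

lemma span_stable {M : Type*} [AddCommGroup M] [Module ℝ M] (T : Module.End ℝ M)
    (P : Set M) (h : ∀ f ∈ P, T f ∈ Submodule.span ℝ P) :
    ∀ f ∈ Submodule.span ℝ P, T f ∈ Submodule.span ℝ P := by
  intro f hf
  induction hf using Submodule.span_induction with
  | mem x hx => exact h x hx
  | zero => simpa using zero_mem _
  | add x y _ _ hx hy => rw [map_add]; exact add_mem hx hy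
  | smul c x _ hx => rw [map_smul]; exact Submodule.smul_mem _ _ hx

lemma T_maps_L (v : MvPolynomial (Fin n ⊕ Fin n) ℝ)
    (T : Module.End ℝ (MvPolynomial (Fin n ⊕ Fin n) ℝ)) (hT : T ∈ S1set n n₁ n₂) :
    ∀ f ∈ Lset n n₁ n₂ v, T f ∈ Lset n n₁ n₂ v := by
  rintro f ⟨l, hl, rfl⟩
  refine ⟨T :: l, ?_, ?_⟩
  · intro S hS
    rcases List.mem_cons.1 hS with rfl | hS
    · exact hT
    · exact hl S hS
  · rw [List.prod_cons, Module.End.mul_apply]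

lemma T_maps (h12 : n₁ + 1 < n₂) :
    ∀ T ∈ S1set n n₁ n₂, ∀ f ∈ Mset n n₁ n₂ m₁ m₂,
      T f ∈ Submodule.span ℝ (Mset n n₁ n₂ m₁ m₂) := by
  rintro T hT f ⟨d, hx, hy, hsx, hsy, rfl⟩
  rcases hT with ⟨i, r, hir, hr, rfl⟩ | ⟨j, s, hj, hjs, hs, rfl⟩ | ⟨p, t, hp, hpt, rfl⟩
  · -- type A
    have hir' : (i : ℕ) < (r : ℕ) := hir
    have hyr : d (Sum.inr r) = 0 := hy r (by omega)
    by_cases hc : d (Sum.inl r) = 0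
    · rw [LinearMap.sub_apply, LinearMap.neg_apply, op_monomial, op_monomial, hc, hyr]
      simp
    · obtain ⟨d₀, hd⟩ : ∃ d₀, d = d₀ + Finsupp.single (Sum.inl r) 1 :=
        ⟨d - Finsupp.single (Sum.inl r) 1, sub_add_single d _ hc⟩
      subst hd
      have hyr0 : d₀ (Sum.inr r) = 0 := by
        have := hyr
        rw [Finsupp.add_apply, Finsupp.single_apply, if_neg (by simp)] at this
        omega
      rw [LinearMap.sub_apply, LinearMap.neg_apply, op_monomial', op_monomial]
      have hcoe : ((d₀ + Finsupp.single (Sum.inl r) 1 : (Fin n ⊕ Fin n) →₀ ℕ)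
          (Sum.inr r)) = 0 := by
        rw [Finsupp.add_apply, Finsupp.single_apply, if_neg (by simp)]
        omega
      rw [hcoe]
      simp only [one_mul, Nat.cast_zero, mul_zero, monomial_zero, sub_zero]
      refine neg_mem ?_
      have hsm : (monomial (d₀ + Finsupp.single (Sum.inl i) 1) ((d₀ (Sum.inl r) : ℝ) + 1))
          = ((d₀ (Sum.inl r) : ℝ) + 1) • monomial (d₀ + Finsupp.single (Sum.inl i) 1) (1:ℝ) := by
        rw [smul_monomial, smul_eq_mul, mul_one]
      rw [hsm]
      refine Submodule.smul_mem _ _ (Submodule.subset_span ?_)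
      refine ⟨d₀ + Finsupp.single (Sum.inl i) 1, ?_, ?_, ?_, ?_, rfl⟩
      · intro a ha
        have h1' := hx a ha
        rw [Finsupp.add_apply, Finsupp.single_apply,
          if_neg (by intro h; rw [Sum.inl.injEq] at h; subst h; omega)] at h1' ⊢
        omega
      · intro a ha
        have h1' := hy a ha
        rw [Finsupp.add_apply, Finsupp.single_apply, if_neg (by simp)] at h1' ⊢
        omega
      · rw [sum_add_single_inl, if_pos (by simp; omega)]
        rw [sum_add_single_inl, if_pos (by simp [hr])] at hsx
        omega
      · rw [sum_add_single_inl_inr]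
        rw [sum_add_single_inl_inr] at hsy
        exact hsy
  · -- type B : acts as zero
    have hxj : d (Sum.inl j) = 0 := hx j hj
    have hys : d (Sum.inr s) = 0 := hy s hs
    rw [LinearMap.sub_apply, op_monomial, op_monomial, hxj, hys]
    simp
  · -- type C
    have hpt' : (p : ℕ) < (t : ℕ) := hpt
    have hxp : d (Sum.inl p) = 0 := hx p (by omega)
    by_cases hc : d (Sum.inr p) = 0
    · rw [LinearMap.add_apply, op_monomial, op_monomial, hxp, hc]
      simp
    · obtain ⟨d₀, hd⟩ : ∃ d₀, d = d₀ + Finsupp.single (Sum.inr p) 1 :=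
        ⟨d - Finsupp.single (Sum.inr p) 1, sub_add_single d _ hc⟩
      subst hd
      rw [LinearMap.add_apply]
      have hcoe : ((d₀ + Finsupp.single (Sum.inr p) 1 : (Fin n ⊕ Fin n) →₀ ℕ)
          (Sum.inl p)) = 0 := by
        have := hxp
        rw [Finsupp.add_apply, Finsupp.single_apply, if_neg (by simp)] at this ⊢
        omega
      rw [op_monomial' (Sum.inr t), op_monomial, hcoe]
      simp only [one_mul, Nat.cast_zero, mul_zero, monomial_zero, zero_add]
      have hsm : (monomial (d₀ + Finsupp.single (Sum.inr t) 1) ((d₀ (Sum.inr p) : ℝ) + 1))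
          = ((d₀ (Sum.inr p) : ℝ) + 1) • monomial (d₀ + Finsupp.single (Sum.inr t) 1) (1:ℝ) := by
        rw [smul_monomial, smul_eq_mul, mul_one]
      rw [hsm]
      refine Submodule.smul_mem _ _ (Submodule.subset_span ?_)
      refine ⟨d₀ + Finsupp.single (Sum.inr t) 1, ?_, ?_, ?_, ?_, rfl⟩
      · intro a ha
        have h1' := hx a ha
        rw [Finsupp.add_apply, Finsupp.single_apply, if_neg (by simp)] at h1' ⊢
        omega
      · intro a ha
        have h1' := hy a ha
        rw [Finsupp.add_apply, Finsupp.single_apply,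
          if_neg (by intro h; rw [Sum.inr.injEq] at h; subst h; omega)] at h1' ⊢
        omega
      · rw [sum_add_single_inr_inl]
        rw [sum_add_single_inr_inl] at hsx
        exact hsx
      · rw [sum_add_single_inr, if_pos (by simp; omega)]
        rw [sum_add_single_inr, if_pos (by simp [hp])] at hsy
        omega


lemma v_monomial (ρ τ : Fin n) :
    (X (Sum.inl ρ) ^ m₁ * X (Sum.inr τ) ^ m₂ : MvPolynomial (Fin n ⊕ Fin n) ℝ)
      = monomial (Finsupp.single (Sum.inl ρ) m₁ + Finsupp.single (Sum.inr τ) m₂) 1 := by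
  rw [X_pow_eq_monomial, X_pow_eq_monomial, monomial_mul, one_mul]

lemma v_mem_M (h1 : 1 ≤ n₁) (ρ τ : Fin n) (hρ : (ρ : ℕ) = n₁ - 1) (hτ : (τ : ℕ) = n₂) :
    (X (Sum.inl ρ) ^ m₁ * X (Sum.inr τ) ^ m₂ : MvPolynomial (Fin n ⊕ Fin n) ℝ)
      ∈ Mset n n₁ n₂ m₁ m₂ := by
  rw [v_monomial]
  refine ⟨_, ?_, ?_, ?_, ?_, rfl⟩
  · intro a ha
    rw [Finsupp.add_apply, Finsupp.single_apply,
      if_neg (by intro h; rw [Sum.inl.injEq] at h; subst h; omega),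
      Finsupp.single_apply, if_neg (by simp)]
    omega
  · intro a ha
    rw [Finsupp.add_apply, Finsupp.single_apply, if_neg (by simp),
      Finsupp.single_apply, if_neg (by intro h; rw [Sum.inr.injEq] at h; subst h; omega)]
    omega
  · rw [Finset.sum_congr rfl (fun j _ => Finsupp.add_apply ..), Finset.sum_add_distrib,
      sum_single_inl, sum_single_inr_inl, if_pos (by simp; omega)]
    omega
  · rw [Finset.sum_congr rfl (fun j _ => Finsupp.add_apply ..), Finset.sum_add_distrib,
      sum_single_inl_inr, sum_single_inr, if_pos (by simp; omega)]
    omega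


lemma rev_mem (h1 : 1 ≤ n₁) (h12 : n₁ + 1 < n₂) (h2 : n₂ < n)
    (ρ τ : Fin n) (hρ : (ρ : ℕ) = n₁ - 1) (hτ : (τ : ℕ) = n₂) :
    ∀ N : ℕ, ∀ d : (Fin n ⊕ Fin n) →₀ ℕ,
      (∀ a : Fin n, n₁ ≤ a.val → d (Sum.inl a) = 0) →
      (∀ a : Fin n, a.val < n₂ → d (Sum.inr a) = 0) →
      (∑ i ∈ Finset.univ.filter (fun i : Fin n => i.val < n₁), d (Sum.inl i)) = m₁ →
      (∑ t ∈ Finset.univ.filter (fun t : Fin n => n₂ ≤ t.val), d (Sum.inr t)) = m₂ →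
      (∑ i ∈ (Finset.univ.filter (fun i : Fin n => i.val < n₁)).erase ρ, d (Sum.inl i))
        + (∑ t ∈ (Finset.univ.filter (fun t : Fin n => n₂ ≤ t.val)).erase τ, d (Sum.inr t))
          = N →
      (monomial d 1 : MvPolynomial (Fin n ⊕ Fin n) ℝ) ∈
        Submodule.span ℝ (Lset n n₁ n₂ (X (Sum.inl ρ) ^ m₁ * X (Sum.inr τ) ^ m₂)) := by
  intro N
  induction N using Nat.strong_induction_on with
  | _ N IH =>
  intro d hx hy hsx hsy hN
  rcases Nat.eq_zero_or_pos N with rfl | hNpos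
  · -- base case : d is concentrated at ρ and τ
    have hx0 : ∀ i ∈ (Finset.univ.filter (fun i : Fin n => i.val < n₁)).erase ρ,
        d (Sum.inl i) = 0 :=
      Finset.sum_eq_zero_iff.mp (by omega)
    have hy0 : ∀ t ∈ (Finset.univ.filter (fun t : Fin n => n₂ ≤ t.val)).erase τ,
        d (Sum.inr t) = 0 :=
      Finset.sum_eq_zero_iff.mp (by omega)
    have hmemρ : ρ ∈ Finset.univ.filter (fun i : Fin n => i.val < n₁) := by
      simp only [Finset.mem_filter, Finset.mem_univ, true_and]
      omega
    have hmemτ : τ ∈ Finset.univ.filter (fun t : Fin n => n₂ ≤ t.val) := by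
      simp only [Finset.mem_filter, Finset.mem_univ, true_and]
      omega
    have htotx : d (Sum.inl ρ) + ∑ i ∈ (Finset.univ.filter
          (fun i : Fin n => i.val < n₁)).erase ρ, d (Sum.inl i)
        = ∑ i ∈ Finset.univ.filter (fun i : Fin n => i.val < n₁), d (Sum.inl i) :=
      Finset.add_sum_erase _ (fun i => d (Sum.inl i)) hmemρ
    have htoty : d (Sum.inr τ) + ∑ t ∈ (Finset.univ.filter
          (fun t : Fin n => n₂ ≤ t.val)).erase τ, d (Sum.inr t)
        = ∑ t ∈ Finset.univ.filter (fun t : Fin n => n₂ ≤ t.val), d (Sum.inr t) :=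
      Finset.add_sum_erase _ (fun t => d (Sum.inr t)) hmemτ
    have hex : ∑ i ∈ (Finset.univ.filter (fun i : Fin n => i.val < n₁)).erase ρ,
        d (Sum.inl i) = 0 := by omega
    have hey : ∑ t ∈ (Finset.univ.filter (fun t : Fin n => n₂ ≤ t.val)).erase τ,
        d (Sum.inr t) = 0 := by omega
    have hdd : d = Finsupp.single (Sum.inl ρ : Fin n ⊕ Fin n) m₁
        + Finsupp.single (Sum.inr τ) m₂ := by
      ext a
      rw [Finsupp.add_apply, Finsupp.single_apply, Finsupp.single_apply]
      cases a with
      | inl b =>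
        rw [if_neg (show ¬(Sum.inr τ : Fin n ⊕ Fin n) = Sum.inl b by simp), add_zero]
        by_cases hb : ρ = b
        · subst hb
          rw [if_pos rfl]
          omega
        · rw [if_neg (by intro h; rw [Sum.inl.injEq] at h; exact hb h)]
          rcases Nat.lt_or_ge (b : ℕ) n₁ with hb2 | hb2
          · exact hx0 b (Finset.mem_erase.mpr ⟨fun h => hb h.symm, by
              simp only [Finset.mem_filter, Finset.mem_univ, true_and]; omega⟩)
          · exact hx b hb2
      | inr b =>
        rw [if_neg (show ¬(Sum.inl ρ : Fin n ⊕ Fin n) = Sum.inr b by simp), zero_add]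
        by_cases hb : τ = b
        · subst hb
          rw [if_pos rfl]
          omega
        · rw [if_neg (by intro h; rw [Sum.inr.injEq] at h; exact hb h)]
          rcases Nat.lt_or_ge (b : ℕ) n₂ with hb2 | hb2
          · exact hy b hb2
          · exact hy0 b (Finset.mem_erase.mpr ⟨fun h => hb h.symm, by
              simp only [Finset.mem_filter, Finset.mem_univ, true_and]; omega⟩)
    rw [hdd, ← v_monomial]
    exact Submodule.subset_span ⟨[], fun T hT => absurd hT (fun h => List.not_mem_nil h), by simp⟩
  · -- inductive step
    by_cases hcx : (∑ i ∈ (Finset.univ.filter (fun i : Fin n => i.val < n₁)).erase ρ,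
        d (Sum.inl i)) = 0
    · -- move a unit in the y block
      have hcy : (∑ t ∈ (Finset.univ.filter (fun t : Fin n => n₂ ≤ t.val)).erase τ,
          d (Sum.inr t)) ≠ 0 := by omega
      obtain ⟨j, hjmem, hj⟩ := Finset.exists_ne_zero_of_sum_ne_zero hcy
      have hjmem' := hjmem
      rw [Finset.mem_erase, Finset.mem_filter] at hjmem'
      obtain ⟨hjτ, -, hjge⟩ := hjmem'
      have hjτ' : n₂ < (j : ℕ) := by
        rcases Nat.lt_or_ge n₂ (j : ℕ) with h | h
        · exact h
        · exact absurd (Fin.ext (by omega : (j:ℕ) = (τ:ℕ))) hjτ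
      obtain ⟨d₀, hd⟩ : ∃ d₀, d = d₀ + Finsupp.single (Sum.inr j) 1 :=
        ⟨d - Finsupp.single (Sum.inr j) 1, sub_add_single d _ hj⟩
      have hx0 : ∀ a : Fin n, n₁ ≤ (a:ℕ) → d₀ (Sum.inl a) = 0 := by
        intro a ha
        have h' := hx a ha
        rw [hd, Finsupp.add_apply] at h'
        omega
      have hy0 : ∀ a : Fin n, (a:ℕ) < n₂ → d₀ (Sum.inr a) = 0 := by
        intro a ha
        have h' := hy a ha
        rw [hd, Finsupp.add_apply] at h'
        omega
      -- the predecessor exponent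
      set e : (Fin n ⊕ Fin n) →₀ ℕ := d₀ + Finsupp.single (Sum.inr τ) 1 with he
      have hxe : ∀ a : Fin n, n₁ ≤ (a:ℕ) → e (Sum.inl a) = 0 := by
        intro a ha
        rw [he, Finsupp.add_apply, Finsupp.single_apply, if_neg (by simp), hx0 a ha]
        omega
      have hye : ∀ a : Fin n, (a:ℕ) < n₂ → e (Sum.inr a) = 0 := by
        intro a ha
        rw [he, Finsupp.add_apply, Finsupp.single_apply,
          if_neg (by intro h; rw [Sum.inr.injEq] at h; subst h; omega), hy0 a ha]
        omega
      have hsxe : (∑ i ∈ Finset.univ.filter (fun i : Fin n => i.val < n₁),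
          e (Sum.inl i)) = m₁ := by
        rw [he, sum_add_single_inr_inl]
        rw [hd, sum_add_single_inr_inl] at hsx
        exact hsx
      have hsye : (∑ t ∈ Finset.univ.filter (fun t : Fin n => n₂ ≤ t.val),
          e (Sum.inr t)) = m₂ := by
        rw [he, sum_add_single_inr, if_pos (by
          simp only [Finset.mem_filter, Finset.mem_univ, true_and]; omega)]
        rw [hd, sum_add_single_inr, if_pos (by
          simp only [Finset.mem_filter, Finset.mem_univ, true_and]; omega)] at hsy
        omega
      -- measure computations
      have hm1 : (∑ i ∈ (Finset.univ.filter (fun i : Fin n => i.val < n₁)).erase ρ,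
          e (Sum.inl i)) = ∑ i ∈ (Finset.univ.filter (fun i : Fin n => i.val < n₁)).erase ρ,
          d₀ (Sum.inl i) := by
        rw [he, sum_add_single_inr_inl]
      have hm2 : (∑ t ∈ (Finset.univ.filter (fun t : Fin n => n₂ ≤ t.val)).erase τ,
          e (Sum.inr t)) = ∑ t ∈ (Finset.univ.filter (fun t : Fin n => n₂ ≤ t.val)).erase τ,
          d₀ (Sum.inr t) := by
        rw [he, sum_add_single_inr, if_neg (Finset.notMem_erase τ _), add_zero]
      have hm3 : (∑ i ∈ (Finset.univ.filter (fun i : Fin n => i.val < n₁)).erase ρ,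
          d (Sum.inl i)) = ∑ i ∈ (Finset.univ.filter (fun i : Fin n => i.val < n₁)).erase ρ,
          d₀ (Sum.inl i) := by
        rw [hd, sum_add_single_inr_inl]
      have hm4 : (∑ t ∈ (Finset.univ.filter (fun t : Fin n => n₂ ≤ t.val)).erase τ,
          d (Sum.inr t)) = (∑ t ∈ (Finset.univ.filter (fun t : Fin n => n₂ ≤ t.val)).erase τ,
          d₀ (Sum.inr t)) + 1 := by
        rw [hd, sum_add_single_inr, if_pos hjmem]
      have hlt : (∑ i ∈ (Finset.univ.filter (fun i : Fin n => i.val < n₁)).erase ρ,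
            e (Sum.inl i))
          + (∑ t ∈ (Finset.univ.filter (fun t : Fin n => n₂ ≤ t.val)).erase τ,
            e (Sum.inr t)) < N := by omega
      have hIH := IH _ hlt e hxe hye hsxe hsye rfl
      -- the operator
      set A : Module.End ℝ (MvPolynomial (Fin n ⊕ Fin n) ℝ) :=
        mulE (X (Sum.inl j)) * pdE (Sum.inl τ)
          + mulE (X (Sum.inr j)) * pdE (Sum.inr τ) with hAdef
      have hA : A ∈ S1set n n₁ n₂ := by
        refine Or.inr (Or.inr ⟨τ, j, by omega, ?_, hAdef⟩)
        rw [Fin.lt_def]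
        omega
      have key : A (monomial e (1:ℝ))
          = ((d₀ (Sum.inr τ) : ℝ) + 1) • monomial d 1 := by
        rw [hAdef, LinearMap.add_apply, he, op_monomial' (Sum.inr j), op_monomial]
        have h2 : ((d₀ + Finsupp.single (Sum.inr τ) 1 : (Fin n ⊕ Fin n) →₀ ℕ)
            (Sum.inl τ)) = 0 := by
          rw [Finsupp.add_apply, Finsupp.single_apply, if_neg (by simp), hx0 τ (by omega)]
          omega
        rw [h2]
        simp only [one_mul, Nat.cast_zero, mul_zero, monomial_zero, zero_add]
        rw [← hd, smul_monomial, smul_eq_mul, mul_one]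
      have hmem : A (monomial e (1:ℝ)) ∈
          Submodule.span ℝ (Lset n n₁ n₂ (X (Sum.inl ρ) ^ m₁ * X (Sum.inr τ) ^ m₂)) :=
        span_stable A _
          (fun f hf => Submodule.subset_span (T_maps_L n n₁ n₂ _ A hA f hf)) _ hIH
      have hne : ((d₀ (Sum.inr τ) : ℝ) + 1) ≠ 0 := by positivity
      have hfin : (monomial d (1:ℝ) : MvPolynomial (Fin n ⊕ Fin n) ℝ)
          = ((d₀ (Sum.inr τ) : ℝ) + 1)⁻¹ • A (monomial e (1:ℝ)) := by
        rw [key, smul_smul, inv_mul_cancel₀ hne, one_smul]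
      rw [hfin]
      exact Submodule.smul_mem _ _ hmem
    · -- move a unit in the x block
      obtain ⟨j, hjmem, hj⟩ := Finset.exists_ne_zero_of_sum_ne_zero hcx
      have hjmem' := hjmem
      rw [Finset.mem_erase, Finset.mem_filter] at hjmem'
      obtain ⟨hjρ, -, hjlt⟩ := hjmem'
      have hjρ' : (j : ℕ) < n₁ - 1 := by
        rcases Nat.lt_or_ge (j : ℕ) (n₁ - 1) with h | h
        · exact h
        · exact absurd (Fin.ext (by omega : (j:ℕ) = (ρ:ℕ))) hjρ
      obtain ⟨d₀, hd⟩ : ∃ d₀, d = d₀ + Finsupp.single (Sum.inl j) 1 :=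
        ⟨d - Finsupp.single (Sum.inl j) 1, sub_add_single d _ hj⟩
      have hx0 : ∀ a : Fin n, n₁ ≤ (a:ℕ) → d₀ (Sum.inl a) = 0 := by
        intro a ha
        have h' := hx a ha
        rw [hd, Finsupp.add_apply] at h'
        omega
      have hy0 : ∀ a : Fin n, (a:ℕ) < n₂ → d₀ (Sum.inr a) = 0 := by
        intro a ha
        have h' := hy a ha
        rw [hd, Finsupp.add_apply] at h'
        omega
      set e : (Fin n ⊕ Fin n) →₀ ℕ := d₀ + Finsupp.single (Sum.inl ρ) 1 with he
      have hxe : ∀ a : Fin n, n₁ ≤ (a:ℕ) → e (Sum.inl a) = 0 := by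
        intro a ha
        rw [he, Finsupp.add_apply, Finsupp.single_apply,
          if_neg (by intro h; rw [Sum.inl.injEq] at h; subst h; omega), hx0 a ha]
        omega
      have hye : ∀ a : Fin n, (a:ℕ) < n₂ → e (Sum.inr a) = 0 := by
        intro a ha
        rw [he, Finsupp.add_apply, Finsupp.single_apply, if_neg (by simp), hy0 a ha]
        omega
      have hsxe : (∑ i ∈ Finset.univ.filter (fun i : Fin n => i.val < n₁),
          e (Sum.inl i)) = m₁ := by
        rw [he, sum_add_single_inl, if_pos (by
          simp only [Finset.mem_filter, Finset.mem_univ, true_and]; omega)]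
        rw [hd, sum_add_single_inl, if_pos (by
          simp only [Finset.mem_filter, Finset.mem_univ, true_and]; omega)] at hsx
        omega
      have hsye : (∑ t ∈ Finset.univ.filter (fun t : Fin n => n₂ ≤ t.val),
          e (Sum.inr t)) = m₂ := by
        rw [he, sum_add_single_inl_inr]
        rw [hd, sum_add_single_inl_inr] at hsy
        exact hsy
      have hm1 : (∑ i ∈ (Finset.univ.filter (fun i : Fin n => i.val < n₁)).erase ρ,
          e (Sum.inl i)) = ∑ i ∈ (Finset.univ.filter (fun i : Fin n => i.val < n₁)).erase ρ,
          d₀ (Sum.inl i) := by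
        rw [he, sum_add_single_inl, if_neg (Finset.notMem_erase ρ _), add_zero]
      have hm2 : (∑ t ∈ (Finset.univ.filter (fun t : Fin n => n₂ ≤ t.val)).erase τ,
          e (Sum.inr t)) = ∑ t ∈ (Finset.univ.filter (fun t : Fin n => n₂ ≤ t.val)).erase τ,
          d₀ (Sum.inr t) := by
        rw [he, sum_add_single_inl_inr]
      have hm3 : (∑ i ∈ (Finset.univ.filter (fun i : Fin n => i.val < n₁)).erase ρ,
          d (Sum.inl i)) = (∑ i ∈ (Finset.univ.filter (fun i : Fin n => i.val < n₁)).erase ρ,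
          d₀ (Sum.inl i)) + 1 := by
        rw [hd, sum_add_single_inl, if_pos hjmem]
      have hm4 : (∑ t ∈ (Finset.univ.filter (fun t : Fin n => n₂ ≤ t.val)).erase τ,
          d (Sum.inr t)) = ∑ t ∈ (Finset.univ.filter (fun t : Fin n => n₂ ≤ t.val)).erase τ,
          d₀ (Sum.inr t) := by
        rw [hd, sum_add_single_inl_inr]
      have hlt : (∑ i ∈ (Finset.univ.filter (fun i : Fin n => i.val < n₁)).erase ρ,
            e (Sum.inl i))
          + (∑ t ∈ (Finset.univ.filter (fun t : Fin n => n₂ ≤ t.val)).erase τ,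
            e (Sum.inr t)) < N := by omega
      have hIH := IH _ hlt e hxe hye hsxe hsye rfl
      set A : Module.End ℝ (MvPolynomial (Fin n ⊕ Fin n) ℝ) :=
        -(mulE (X (Sum.inl j)) * pdE (Sum.inl ρ))
          - mulE (X (Sum.inr j)) * pdE (Sum.inr ρ) with hAdef
      have hA : A ∈ S1set n n₁ n₂ := by
        refine Or.inl ⟨j, ρ, ?_, by omega, hAdef⟩
        rw [Fin.lt_def]
        omega
      have key : A (monomial e (1:ℝ))
          = (-((d₀ (Sum.inl ρ) : ℝ) + 1)) • monomial d 1 := by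
        rw [hAdef, LinearMap.sub_apply, LinearMap.neg_apply, he,
          op_monomial' (Sum.inl j), op_monomial]
        have h2 : ((d₀ + Finsupp.single (Sum.inl ρ) 1 : (Fin n ⊕ Fin n) →₀ ℕ)
            (Sum.inr ρ)) = 0 := by
          rw [Finsupp.add_apply, Finsupp.single_apply, if_neg (by simp), hy0 ρ (by omega)]
          omega
        rw [h2]
        simp only [one_mul, Nat.cast_zero, mul_zero, monomial_zero, sub_zero]
        rw [← hd, smul_monomial, smul_eq_mul, mul_one, ← map_neg]
      have hmem : A (monomial e (1:ℝ)) ∈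
          Submodule.span ℝ (Lset n n₁ n₂ (X (Sum.inl ρ) ^ m₁ * X (Sum.inr τ) ^ m₂)) :=
        span_stable A _
          (fun f hf => Submodule.subset_span (T_maps_L n n₁ n₂ _ A hA f hf)) _ hIH
      have hne : (-((d₀ (Sum.inl ρ) : ℝ) + 1)) ≠ 0 :=
        neg_ne_zero.mpr (by positivity)
      have hfin : (monomial d (1:ℝ) : MvPolynomial (Fin n ⊕ Fin n) ℝ)
          = (-((d₀ (Sum.inl ρ) : ℝ) + 1))⁻¹ • A (monomial e (1:ℝ)) := by
        rw [key, smul_smul, inv_mul_cancel₀ hne, one_smul]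
      rw [hfin]
      exact Submodule.smul_mem _ _ hmem

end Main

/-- the span of all T₁(T₂(⋯T_j(v)⋯)), T₁,…,T_j ∈ S₁, v = x_{n₁}^{m₁} y_{n₂+1}^{m₂}
(0-based: x-index n₁−1 and y-index n₂), equals the span of the monomials
∏ x_i^{k_i} ∏ y_t^{l_t} with ∑ k_i = m₁ (over 1 ≤ i ≤ n₁) and ∑ l_t = m₂ (over n₂+1 ≤ t ≤ n). -/
theorem stmt_8 (n n₁ n₂ m₁ m₂ : ℕ) (hn : 2 ≤ n) (h1 : 1 ≤ n₁) (h12 : n₁ + 1 < n₂)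
    (h2 : n₂ < n) :
    Submodule.span ℝ
      {f : MvPolynomial (Fin n ⊕ Fin n) ℝ |
        ∃ l : List (Module.End ℝ (MvPolynomial (Fin n ⊕ Fin n) ℝ)),
          (∀ T ∈ l, T ∈ S1set n n₁ n₂) ∧
          f = l.prod (X (Sum.inl (⟨n₁ - 1, by omega⟩ : Fin n)) ^ m₁ *
                X (Sum.inr (⟨n₂, by omega⟩ : Fin n)) ^ m₂)} =
    Submodule.span ℝ
      {f : MvPolynomial (Fin n ⊕ Fin n) ℝ |
        ∃ kk ll : Fin n → ℕ,
          (∑ i ∈ Finset.univ.filter (fun i : Fin n => i.val < n₁), kk i) = m₁ ∧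
          (∑ t ∈ Finset.univ.filter (fun t : Fin n => n₂ ≤ t.val), ll t) = m₂ ∧
          f = (∏ i ∈ Finset.univ.filter (fun i : Fin n => i.val < n₁),
                X (Sum.inl i) ^ kk i) *
              (∏ t ∈ Finset.univ.filter (fun t : Fin n => n₂ ≤ t.val),
                X (Sum.inr t) ^ ll t)} := by
  rw [← Mset_eq n n₁ n₂ m₁ m₂]
  have hall : ∀ l : List (Module.End ℝ (MvPolynomial (Fin n ⊕ Fin n) ℝ)),
      (∀ T ∈ l, T ∈ S1set n n₁ n₂) →
      l.prod (X (Sum.inl (⟨n₁ - 1, by omega⟩ : Fin n)) ^ m₁ *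
        X (Sum.inr (⟨n₂, by omega⟩ : Fin n)) ^ m₂) ∈
        Submodule.span ℝ (Mset n n₁ n₂ m₁ m₂) := by
    intro l
    induction l with
    | nil =>
      intro _
      rw [List.prod_nil, Module.End.one_apply]
      exact Submodule.subset_span (v_mem_M n n₁ n₂ m₁ m₂ h1 _ _ rfl rfl)
    | cons T l ih =>
      intro hl
      rw [List.prod_cons, Module.End.mul_apply]
      exact span_stable T _
        (T_maps n n₁ n₂ m₁ m₂ h12 T (hl T List.mem_cons_self)) _
        (ih fun S hS => hl S (List.mem_cons_of_mem T hS))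
  refine le_antisymm (Submodule.span_le.2 ?_) (Submodule.span_le.2 ?_)
  · rintro f ⟨l, hl, rfl⟩
    exact hall l hl
  · rintro f ⟨d, hx, hy, hsx, hsy, rfl⟩
    exact rev_mem n n₁ n₂ m₁ m₂ h1 h12 h2 ⟨n₁ - 1, by omega⟩ ⟨n₂, by omega⟩ rfl rfl _ d
      hx hy hsx hsy rfl
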